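/- The folded hypercube FQ_n is bipartite if and only if n is odd. -/

import Mathlib

open SimpleGraph

/-- The `n`-dimensional hypercube: vertices are binary strings of length `n`
(indexed so that bit `i+1` of the paper is index `i`), adjacent iff they
differ in exactly one bit. -/
def hypercube (n : ℕ) : SimpleGraph (Fin n → Bool) where
  Adj u v := ∃! i, u i ≠ v i
  symm := by
    constructor
    rintro u v ⟨i, hi, hu⟩
    exact ⟨i, hi.symm, fun j hj => hu j hj.symm⟩
  loopless := by
    constructor
    rintro u ⟨i, hi, -⟩
    exact hi rfl

/-- Skip relation: `u` and `v` differ exactly in the last `k` bits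
(indices `0, …, k-1`). -/
def skipRel (n k : ℕ) (u v : Fin n → Bool) : Prop :=
  u ≠ v ∧ ∀ i : Fin n, (i.val < k → u i ≠ v i) ∧ (k ≤ i.val → u i = v i)

/-- The enhanced hypercube `Q_{n,k}`: hypercube edges together with skip edges. -/
def enhanced (n k : ℕ) : SimpleGraph (Fin n → Bool) where
  Adj u v := (hypercube n).Adj u v ∨ skipRel n k u v
  symm := by
    constructor
    rintro u v (h | ⟨hne, h⟩)
    · exact Or.inl ((hypercube n).adj_symm h)
    · exact Or.inr ⟨hne.symm, fun i =>
        ⟨fun hi => ((h i).1 hi).symm, fun hi => ((h i).2 hi).symm⟩⟩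
  loopless := by
    constructor
    rintro u (h | ⟨hne, -⟩)
    · exact (hypercube n).loopless.irrefl u h
    · exact hne rfl

/-- The folded hypercube `FQ_n`: hypercube edges together with complementary edges. -/
def folded (n : ℕ) : SimpleGraph (Fin n → Bool) where
  Adj u v := (hypercube n).Adj u v ∨ (u ≠ v ∧ ∀ i, u i ≠ v i)
  symm := by
    constructor
    rintro u v (h | ⟨hne, h⟩)
    · exact Or.inl ((hypercube n).adj_symm h)
    · exact Or.inr ⟨hne.symm, fun i => (h i).symm⟩
  loopless := by
    constructor
    rintro u (h | ⟨hne, -⟩)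
    · exact (hypercube n).loopless.irrefl u h
    · exact hne rfl

/-- The Cartesian product `K₂ × G`: two copies of `G` joined by crossing edges. -/
def K2Prod {V : Type*} (G : SimpleGraph V) : SimpleGraph (Bool × V) :=
  (completeGraph Bool) □ G

/-- The edge `e` lies on a cycle of length `l` in `G`. -/
def EdgeOnCycle {V : Type*} (G : SimpleGraph V) (e : Sym2 V) (l : ℕ) : Prop :=
  ∃ (v : V) (c : G.Walk v v), c.IsCycle ∧ c.length = l ∧ e ∈ c.edges

/-- The folded hypercube `FQ_n` is bipartite if and only if `n` is odd. -/
theorem stmt10 (n : ℕ) (hn : 1 ≤ n) :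
    (folded n).Colorable 2 ↔ Odd n := by
  constructor
  · rintro ⟨C⟩
    let D : (Fin n → Bool) → ZMod 2 := fun v => C v
    have hD : ∀ u v, (folded n).Adj u v → D u ≠ D v := fun u v h => C.valid h
    set u : ℕ → (Fin n → Bool) := fun k i => decide (i.val < k) with hu
    have hstep : ∀ k, k < n → D (u (k+1)) = D (u k) + 1 := by
      intro k hk
      have hadj : (folded n).Adj (u k) (u (k+1)) := by
        left
        refine ⟨⟨k, hk⟩, ?_, ?_⟩
        · simp [hu]
        · intro j hj
          simp only [hu, ne_eq, decide_eq_decide] at hj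
          have hj' : j.val = k := by
            by_contra hne
            exact hj ⟨fun h => by omega, fun h => by omega⟩
          exact Fin.ext hj'
      have := hD _ _ hadj
      revert this
      generalize D (u (k+1)) = a
      generalize D (u k) = b
      revert a b
      decide
    have hind : ∀ k, k ≤ n → D (u k) = D (u 0) + (k : ZMod 2) := by
      intro k
      induction k with
      | zero => simp
      | succ m ih =>
        intro hm
        rw [hstep m (by omega), ih (by omega)]
        push_cast
        ring
    have hcomp : (folded n).Adj (u 0) (u n) := by
      right
      constructor
      · intro h
        have := congrFun h ⟨0, hn⟩
        simp [hu] at this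
        omega
      · intro i
        simp [hu, i.isLt]
    have h1 := hD _ _ hcomp
    rw [hind n le_rfl] at h1
    have h2 : (n : ZMod 2) ≠ 0 := by
      intro h
      rw [h, add_zero] at h1
      exact h1 rfl
    rw [Ne, ZMod.natCast_eq_zero_iff] at h2
    exact Nat.odd_iff.mpr (Nat.two_dvd_ne_zero.mp h2)
  · intro hodd
    refine ⟨Coloring.mk (α := ZMod 2) (fun v => ∑ i, if v i then (1 : ZMod 2) else 0) ?_⟩
    intro a b hab heq
    have key : (∑ i, if a i then (1 : ZMod 2) else 0) + (∑ i, if b i then (1 : ZMod 2) else 0) = 1 := by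
      simp only [← Finset.sum_add_distrib]
      rcases hab with ⟨j, hj, huniq⟩ | ⟨-, hall⟩
      · have : ∀ i : Fin n, ((if a i then (1 : ZMod 2) else 0) + (if b i then (1 : ZMod 2) else 0)) = if i = j then 1 else 0 := by
          intro i
          by_cases hij : i = j
          · subst hij
            cases ha : a i <;> cases hb : b i <;> simp_all <;> decide
          · have : a i = b i := by
              by_contra hne
              exact hij (huniq i hne)
            rw [this]
            cases b i <;> simp [hij] <;> decide
        rw [Finset.sum_congr rfl (fun i _ => this i)]
        simp
      · have : ∀ i : Fin n, ((if a i then (1 : ZMod 2) else 0) + (if b i then (1 : ZMod 2) else 0)) = 1 := by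
          intro i
          have := hall i
          cases ha : a i <;> cases hb : b i <;> simp_all <;> decide
        rw [Finset.sum_congr rfl (fun i _ => this i)]
        simp
        obtain ⟨k, hk⟩ := hodd
        subst hk
        push_cast
        rw [show (2 : ZMod 2) = 0 by decide]
        ring
    change (∑ i, if a i then (1 : ZMod 2) else 0) = (∑ i, if b i then (1 : ZMod 2) else 0) at heq
    rw [heq] at key
    have : (2 : ZMod 2) = 0 := by decide
    rw [← two_mul] at key
    rw [this, zero_mul] at key
    exact absurd key (by decide)
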